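/- arXiv:1505.01394 — 4 statements merged into one kernel-verified Lean document; each statement's English description precedes it below -/
import Mathlib

section
/- Let C : ℝ^d → ℝ be integrable with spectral density f(ω) = (2π)^{−d} ∫_{ℝ^d} C(h)·e^{−i⟨ω,h⟩} dh, and let g₁, g₂ : ℝ^d → ℝ be integrable, square-integrable, even kernel functions with Fourier transforms ĝ_k(ω) = ∫_{ℝ^d} g_k(x)·e^{−i⟨ω,x⟩} dx (real-valued since g_k is real and even). Define, for k, ℓ ∈ {1, 2}, C_{kℓ}(h) = ∫_{ℝ^d} ∫_{ℝ^d} g_k(u)·g_ℓ(v)·C(u − v + h) du dv. Then the spectral densities satisfy f_{kℓ}(ω) = f(ω)·ĝ_k(ω)·ĝ_ℓ(ω), and consequently for every ω ∈ ℝ^d with f(ω) > 0, ĝ₁(ω) ≠ 0 and ĝ₂(ω) ≠ 0, the squared coherence |f₁₂(ω)|²/( f₁₁(ω)·f₂₂(ω) ) equals 1. -/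
open MeasureTheory
open scoped RealInnerProductSpace

namespace KernelConvAux

variable {d : ℕ}

noncomputable def e (ω h : EuclideanSpace ℝ (Fin d)) : ℂ :=
  Complex.exp (-Complex.I * (⟪ω, h⟫ : ℂ))

lemma e_def (ω h : EuclideanSpace ℝ (Fin d)) :
    e ω h = Complex.exp (-Complex.I * (⟪ω, h⟫ : ℂ)) := rfl

lemma norm_e (ω h : EuclideanSpace ℝ (Fin d)) : ‖e ω h‖ = 1 := by
  simp [e, Complex.norm_exp]

lemma e_add (ω a h : EuclideanSpace ℝ (Fin d)) : e ω (a + h) = e ω a * e ω h := by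
  rw [e, e, e, ← Complex.exp_add]
  congr 1
  rw [inner_add_right]
  push_cast
  ring

lemma measurable_e (ω : EuclideanSpace ℝ (Fin d)) : Measurable (e ω) := by
  apply Complex.measurable_exp.comp
  exact measurable_const.mul
    (Complex.measurable_ofReal.comp (continuous_const.inner continuous_id).measurable)

lemma main (ω : EuclideanSpace ℝ (Fin d)) (C gk gl : EuclideanSpace ℝ (Fin d) → ℝ)
    (hC : Integrable C) (hgk : Integrable gk) (hgl : Integrable gl) :
    ∫ h : EuclideanSpace ℝ (Fin d),
        Complex.ofReal (∫ u : EuclideanSpace ℝ (Fin d), ∫ v : EuclideanSpace ℝ (Fin d),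
          gk u * gl v * C (u - v + h)) * e ω h
      = (∫ u : EuclideanSpace ℝ (Fin d),
            (gk u : ℂ) * Complex.exp (Complex.I * (⟪ω, u⟫ : ℂ)))
        * (∫ v : EuclideanSpace ℝ (Fin d), (gl v : ℂ) * e ω v)
        * ∫ t : EuclideanSpace ℝ (Fin d), (C t : ℂ) * e ω t := by
  set μ2 : Measure (EuclideanSpace ℝ (Fin d) × EuclideanSpace ℝ (Fin d)) :=
    (volume : Measure (EuclideanSpace ℝ (Fin d))).prod volume with hμ2
  have hP : Integrable (fun x : EuclideanSpace ℝ (Fin d) × EuclideanSpace ℝ (Fin d) =>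
      gk x.1 * gl x.2) μ2 := hgk.mul_prod hgl
  have hP' : Integrable
      (fun p : (EuclideanSpace ℝ (Fin d) × EuclideanSpace ℝ (Fin d)) × EuclideanSpace ℝ (Fin d) =>
        (gk p.1.1 * gl p.1.2) * C p.2) (μ2.prod volume) := hP.mul_prod hC
  have hS : MeasurePreserving
      (fun p : (EuclideanSpace ℝ (Fin d) × EuclideanSpace ℝ (Fin d)) × EuclideanSpace ℝ (Fin d) =>
        (p.1, p.1.1 - p.1.2 + p.2)) (μ2.prod volume) (μ2.prod volume) := by
    refine MeasurePreserving.skew_product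
      (g := fun (x : EuclideanSpace ℝ (Fin d) × EuclideanSpace ℝ (Fin d))
        (h : EuclideanSpace ℝ (Fin d)) => x.1 - x.2 + h)
      (MeasurePreserving.id μ2) ?_ ?_
    · exact (measurable_fst.fst.sub measurable_fst.snd).add measurable_snd
    · exact Filter.Eventually.of_forall fun x =>
        map_add_left_eq_self (volume : Measure (EuclideanSpace ℝ (Fin d))) _
  have hK : Integrable
      (fun p : (EuclideanSpace ℝ (Fin d) × EuclideanSpace ℝ (Fin d)) × EuclideanSpace ℝ (Fin d) =>
        gk p.1.1 * gl p.1.2 * C (p.1.1 - p.1.2 + p.2)) (μ2.prod volume) :=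
    (hS.integrable_comp hP'.aestronglyMeasurable).2 hP'
  have hJ0 : Integrable
      (fun p : (EuclideanSpace ℝ (Fin d) × EuclideanSpace ℝ (Fin d)) × EuclideanSpace ℝ (Fin d) =>
        (gk p.1.1 : ℂ) * (gl p.1.2 : ℂ) * (C (p.1.1 - p.1.2 + p.2) : ℂ)) (μ2.prod volume) := by
    have h1 : Integrable
        (fun p : (EuclideanSpace ℝ (Fin d) × EuclideanSpace ℝ (Fin d)) × EuclideanSpace ℝ (Fin d) =>
          ((gk p.1.1 * gl p.1.2 * C (p.1.1 - p.1.2 + p.2) : ℝ) : ℂ)) (μ2.prod volume) := hK.ofReal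
    refine h1.congr (Filter.Eventually.of_forall fun p => ?_)
    push_cast
    ring
  have hJ : Integrable
      (fun p : (EuclideanSpace ℝ (Fin d) × EuclideanSpace ℝ (Fin d)) × EuclideanSpace ℝ (Fin d) =>
        (gk p.1.1 : ℂ) * (gl p.1.2 : ℂ) * (C (p.1.1 - p.1.2 + p.2) : ℂ) * e ω p.2)
      (μ2.prod volume) := by
    have h1 := hJ0.bdd_mul ((measurable_e ω).comp measurable_snd).aestronglyMeasurable
      (Filter.Eventually.of_forall fun p => le_of_eq (norm_e ω p.2))
    refine h1.congr (Filter.Eventually.of_forall fun p => ?_)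
    simp only [Function.comp]
    ring
  have hsec : ∀ᵐ h : EuclideanSpace ℝ (Fin d), Integrable
      (fun x : EuclideanSpace ℝ (Fin d) × EuclideanSpace ℝ (Fin d) =>
        (gk x.1 : ℂ) * (gl x.2 : ℂ) * (C (x.1 - x.2 + h) : ℂ)) μ2 :=
    hJ0.prod_left_ae
  have key1 : ∫ h : EuclideanSpace ℝ (Fin d),
        Complex.ofReal (∫ u : EuclideanSpace ℝ (Fin d), ∫ v : EuclideanSpace ℝ (Fin d),
          gk u * gl v * C (u - v + h)) * e ω h
      = ∫ h : EuclideanSpace ℝ (Fin d),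
          ∫ x : EuclideanSpace ℝ (Fin d) × EuclideanSpace ℝ (Fin d),
            (gk x.1 : ℂ) * (gl x.2 : ℂ) * (C (x.1 - x.2 + h) : ℂ) * e ω h ∂μ2 := by
    refine integral_congr_ae ?_
    filter_upwards [hsec] with h hh
    have h1 : Complex.ofReal (∫ u : EuclideanSpace ℝ (Fin d), ∫ v : EuclideanSpace ℝ (Fin d),
          gk u * gl v * C (u - v + h))
        = ∫ u : EuclideanSpace ℝ (Fin d), ∫ v : EuclideanSpace ℝ (Fin d),
            (gk u : ℂ) * (gl v : ℂ) * (C (u - v + h) : ℂ) := by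
      calc Complex.ofReal (∫ u : EuclideanSpace ℝ (Fin d), ∫ v : EuclideanSpace ℝ (Fin d),
              gk u * gl v * C (u - v + h))
          = ∫ u : EuclideanSpace ℝ (Fin d),
              Complex.ofReal (∫ v : EuclideanSpace ℝ (Fin d), gk u * gl v * C (u - v + h)) :=
            (integral_ofReal (𝕜 := ℂ)).symm
        _ = ∫ u : EuclideanSpace ℝ (Fin d), ∫ v : EuclideanSpace ℝ (Fin d),
              (gk u : ℂ) * (gl v : ℂ) * (C (u - v + h) : ℂ) := by
            refine integral_congr_ae (Filter.Eventually.of_forall fun u => ?_)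
            calc Complex.ofReal (∫ v : EuclideanSpace ℝ (Fin d), gk u * gl v * C (u - v + h))
                = ∫ v : EuclideanSpace ℝ (Fin d),
                    ((gk u * gl v * C (u - v + h) : ℝ) : ℂ) := (integral_ofReal (𝕜 := ℂ)).symm
              _ = ∫ v : EuclideanSpace ℝ (Fin d),
                    (gk u : ℂ) * (gl v : ℂ) * (C (u - v + h) : ℂ) := by
                  refine integral_congr_ae (Filter.Eventually.of_forall fun v => ?_)
                  push_cast
                  ring
    rw [h1,
      integral_integral (f := fun u v => (gk u : ℂ) * (gl v : ℂ) * (C (u - v + h) : ℂ)) hh]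
    exact (integral_mul_const _ _).symm
  have key2 : (∫ h : EuclideanSpace ℝ (Fin d),
        ∫ x : EuclideanSpace ℝ (Fin d) × EuclideanSpace ℝ (Fin d),
          (gk x.1 : ℂ) * (gl x.2 : ℂ) * (C (x.1 - x.2 + h) : ℂ) * e ω h ∂μ2)
      = ∫ x : EuclideanSpace ℝ (Fin d) × EuclideanSpace ℝ (Fin d),
          ∫ h : EuclideanSpace ℝ (Fin d),
            (gk x.1 : ℂ) * (gl x.2 : ℂ) * (C (x.1 - x.2 + h) : ℂ) * e ω h ∂volume ∂μ2 :=
    (integral_integral_swap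
      (f := fun (x : EuclideanSpace ℝ (Fin d) × EuclideanSpace ℝ (Fin d))
        (h : EuclideanSpace ℝ (Fin d)) =>
        (gk x.1 : ℂ) * (gl x.2 : ℂ) * (C (x.1 - x.2 + h) : ℂ) * e ω h) hJ).symm
  have key3 : ∀ x : EuclideanSpace ℝ (Fin d) × EuclideanSpace ℝ (Fin d),
      (∫ h : EuclideanSpace ℝ (Fin d),
        (gk x.1 : ℂ) * (gl x.2 : ℂ) * (C (x.1 - x.2 + h) : ℂ) * e ω h)
      = ((gk x.1 : ℂ) * (gl x.2 : ℂ) * Complex.exp (Complex.I * (⟪ω, x.1 - x.2⟫ : ℂ)))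
          * ∫ t : EuclideanSpace ℝ (Fin d), (C t : ℂ) * e ω t := by
    intro x
    set a := x.1 - x.2 with ha
    have hcancel : Complex.exp (Complex.I * (⟪ω, a⟫ : ℂ)) * e ω a = 1 := by
      rw [e, ← Complex.exp_add, ← Complex.exp_zero]
      congr 1
      ring
    have hpt : ∀ h : EuclideanSpace ℝ (Fin d),
        (gk x.1 : ℂ) * (gl x.2 : ℂ) * (C (a + h) : ℂ) * e ω h
        = ((gk x.1 : ℂ) * (gl x.2 : ℂ) * Complex.exp (Complex.I * (⟪ω, a⟫ : ℂ)))
            * ((C (a + h) : ℂ) * e ω (a + h)) := by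
      intro h
      rw [e_add]
      linear_combination (-((gk x.1 : ℂ) * (gl x.2 : ℂ) * (C (a + h) : ℂ) * e ω h)) * hcancel
    simp_rw [hpt]
    rw [integral_const_mul,
      integral_add_left_eq_self (fun t : EuclideanSpace ℝ (Fin d) => (C t : ℂ) * e ω t) a]
  have key4 : (∫ x : EuclideanSpace ℝ (Fin d) × EuclideanSpace ℝ (Fin d),
        (((gk x.1 : ℂ) * (gl x.2 : ℂ) * Complex.exp (Complex.I * (⟪ω, x.1 - x.2⟫ : ℂ)))
          * ∫ t : EuclideanSpace ℝ (Fin d), (C t : ℂ) * e ω t) ∂μ2)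
      = (∫ u : EuclideanSpace ℝ (Fin d),
            (gk u : ℂ) * Complex.exp (Complex.I * (⟪ω, u⟫ : ℂ)))
        * (∫ v : EuclideanSpace ℝ (Fin d), (gl v : ℂ) * e ω v)
        * ∫ t : EuclideanSpace ℝ (Fin d), (C t : ℂ) * e ω t := by
    have hsplit : ∀ x : EuclideanSpace ℝ (Fin d) × EuclideanSpace ℝ (Fin d),
        (((gk x.1 : ℂ) * (gl x.2 : ℂ) * Complex.exp (Complex.I * (⟪ω, x.1 - x.2⟫ : ℂ)))
          * ∫ t : EuclideanSpace ℝ (Fin d), (C t : ℂ) * e ω t)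
        = ((gk x.1 : ℂ) * Complex.exp (Complex.I * (⟪ω, x.1⟫ : ℂ)))
          * ((gl x.2 : ℂ) * e ω x.2 * ∫ t : EuclideanSpace ℝ (Fin d), (C t : ℂ) * e ω t) := by
      intro x
      have h2 : Complex.exp (Complex.I * (⟪ω, x.1 - x.2⟫ : ℂ))
          = Complex.exp (Complex.I * (⟪ω, x.1⟫ : ℂ)) * e ω x.2 := by
        rw [e, ← Complex.exp_add]
        congr 1
        rw [inner_sub_right]
        push_cast
        ring
      rw [h2]
      ring
    simp_rw [hsplit]
    rw [integral_prod_mul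
      (f := fun u : EuclideanSpace ℝ (Fin d) =>
        (gk u : ℂ) * Complex.exp (Complex.I * (⟪ω, u⟫ : ℂ)))
      (g := fun v : EuclideanSpace ℝ (Fin d) =>
        (gl v : ℂ) * e ω v * ∫ t : EuclideanSpace ℝ (Fin d), (C t : ℂ) * e ω t),
      integral_mul_const]
    ring
  rw [key1, key2]
  simp_rw [key3]
  exact key4

end KernelConvAux

namespace KernelConvAux2
open KernelConvAux

lemma even_flip {d : ℕ} (ω : EuclideanSpace ℝ (Fin d)) (gk : EuclideanSpace ℝ (Fin d) → ℝ)
    (hge : ∀ x, gk (-x) = gk x) :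
    (∫ u : EuclideanSpace ℝ (Fin d), (gk u : ℂ) * Complex.exp (Complex.I * (⟪ω, u⟫ : ℂ)))
      = ∫ u : EuclideanSpace ℝ (Fin d), (gk u : ℂ) * Complex.exp (-Complex.I * (⟪ω, u⟫ : ℂ)) := by
  rw [← integral_neg_eq_self
    (fun u : EuclideanSpace ℝ (Fin d) => (gk u : ℂ) * Complex.exp (Complex.I * (⟪ω, u⟫ : ℂ)))
    (volume : MeasureTheory.Measure (EuclideanSpace ℝ (Fin d)))]
  refine MeasureTheory.integral_congr_ae (Filter.Eventually.of_forall fun u => ?_)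
  show (gk (-u) : ℂ) * Complex.exp (Complex.I * (⟪ω, -u⟫ : ℂ)) = (gk u : ℂ) * Complex.exp (-Complex.I * (⟪ω, u⟫ : ℂ))
  rw [hge]
  congr 1
  rw [inner_neg_right]
  push_cast
  ring

end KernelConvAux2

open KernelConvAux KernelConvAux2

/-- Kernel convolution against a common latent process forces constant unit coherence:
with `C_kℓ(h) = ∫∫ g_k(u)·g_ℓ(v)·C(u − v + h) du dv`, the spectral densities satisfy
`f_kℓ = f·ĝ_k·ĝ_ℓ`, and the squared coherence equals `1` wherever `f > 0` and the `ĝ_k`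
are nonzero. -/
theorem kernel_convolution_unit_coherence (d : ℕ)
    (C : EuclideanSpace ℝ (Fin d) → ℝ) (hC : Integrable C)
    (f : EuclideanSpace ℝ (Fin d) → ℝ)
    (hf : ∀ ω, (f ω : ℂ) = (((2 * Real.pi) ^ d : ℝ) : ℂ)⁻¹ *
      ∫ h, (C h : ℂ) * Complex.exp (-Complex.I * (⟪ω, h⟫ : ℂ)))
    (g : Fin 2 → EuclideanSpace ℝ (Fin d) → ℝ)
    (hgi : ∀ k, Integrable (g k)) (hg2 : ∀ k, MemLp (g k) 2 volume)
    (hge : ∀ k x, g k (-x) = g k x)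
    (ghat : Fin 2 → EuclideanSpace ℝ (Fin d) → ℂ)
    (hghat : ∀ k ω, ghat k ω =
      ∫ x, (g k x : ℂ) * Complex.exp (-Complex.I * (⟪ω, x⟫ : ℂ)))
    (Ckl : Fin 2 → Fin 2 → EuclideanSpace ℝ (Fin d) → ℝ)
    (hCkl : ∀ k l h, Ckl k l h = ∫ u, ∫ v, g k u * g l v * C (u - v + h))
    (fkl : Fin 2 → Fin 2 → EuclideanSpace ℝ (Fin d) → ℂ)
    (hfkl : ∀ k l ω, fkl k l ω = (((2 * Real.pi) ^ d : ℝ) : ℂ)⁻¹ *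
      ∫ h, (Ckl k l h : ℂ) * Complex.exp (-Complex.I * (⟪ω, h⟫ : ℂ))) :
    (∀ k l ω, fkl k l ω = (f ω : ℂ) * ghat k ω * ghat l ω) ∧
    (∀ ω, 0 < f ω → ghat 0 ω ≠ 0 → ghat 1 ω ≠ 0 →
      (Complex.normSq (fkl 0 1 ω) : ℂ) / (fkl 0 0 ω * fkl 1 1 ω) = 1) := by
  have part1 : ∀ k l ω, fkl k l ω = (f ω : ℂ) * ghat k ω * ghat l ω := by
    intro k l ω
    have hA : (∫ u : EuclideanSpace ℝ (Fin d),
        (g k u : ℂ) * Complex.exp (Complex.I * (⟪ω, u⟫ : ℂ))) = ghat k ω := by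
      rw [even_flip ω (g k) (hge k)]
      exact (hghat k ω).symm
    have hint : (∫ h : EuclideanSpace ℝ (Fin d),
          (Ckl k l h : ℂ) * Complex.exp (-Complex.I * (⟪ω, h⟫ : ℂ)))
        = ghat k ω * ghat l ω *
          ∫ t : EuclideanSpace ℝ (Fin d),
            (C t : ℂ) * Complex.exp (-Complex.I * (⟪ω, t⟫ : ℂ)) := by
      calc (∫ h : EuclideanSpace ℝ (Fin d),
              (Ckl k l h : ℂ) * Complex.exp (-Complex.I * (⟪ω, h⟫ : ℂ)))
          = ∫ h : EuclideanSpace ℝ (Fin d),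
              Complex.ofReal (∫ u : EuclideanSpace ℝ (Fin d), ∫ v : EuclideanSpace ℝ (Fin d),
                g k u * g l v * C (u - v + h)) * e ω h := by
            refine integral_congr_ae (Filter.Eventually.of_forall fun h => ?_)
            show (Ckl k l h : ℂ) * Complex.exp (-Complex.I * (⟪ω, h⟫ : ℂ))
              = Complex.ofReal (∫ u : EuclideanSpace ℝ (Fin d), ∫ v : EuclideanSpace ℝ (Fin d),
                  g k u * g l v * C (u - v + h)) * e ω h
            rw [hCkl]
            rfl
        _ = (∫ u : EuclideanSpace ℝ (Fin d),
              (g k u : ℂ) * Complex.exp (Complex.I * (⟪ω, u⟫ : ℂ)))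
            * (∫ v : EuclideanSpace ℝ (Fin d), (g l v : ℂ) * e ω v)
            * ∫ t : EuclideanSpace ℝ (Fin d), (C t : ℂ) * e ω t :=
            main ω C (g k) (g l) hC (hgi k) (hgi l)
        _ = ghat k ω * ghat l ω *
            ∫ t : EuclideanSpace ℝ (Fin d),
              (C t : ℂ) * Complex.exp (-Complex.I * (⟪ω, t⟫ : ℂ)) := by
            simp only [e_def]
            rw [hA, ← hghat]
    rw [hfkl, hint, hf ω]
    ring
  refine ⟨part1, ?_⟩
  intro ω hpos h0 h1
  have hconj : ∀ k : Fin 2, (starRingEnd ℂ) (ghat k ω) = ghat k ω := by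
    intro k
    calc (starRingEnd ℂ) (ghat k ω)
        = ∫ x : EuclideanSpace ℝ (Fin d),
            (starRingEnd ℂ) ((g k x : ℂ) * Complex.exp (-Complex.I * (⟪ω, x⟫ : ℂ))) := by
          rw [hghat k ω, ← integral_conj]
      _ = ∫ x : EuclideanSpace ℝ (Fin d),
            (g k x : ℂ) * Complex.exp (Complex.I * (⟪ω, x⟫ : ℂ)) := by
          refine integral_congr_ae (Filter.Eventually.of_forall fun x => ?_)
          show (starRingEnd ℂ) ((g k x : ℂ) * Complex.exp (-Complex.I * (⟪ω, x⟫ : ℂ)))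
            = (g k x : ℂ) * Complex.exp (Complex.I * (⟪ω, x⟫ : ℂ))
          rw [map_mul, Complex.conj_ofReal, ← Complex.exp_conj, map_mul, map_neg,
            Complex.conj_I, Complex.conj_ofReal, neg_neg]
      _ = ghat k ω := by rw [even_flip ω (g k) (hge k), ← hghat]
  have hFne : (f ω : ℂ) ≠ 0 := Complex.ofReal_ne_zero.mpr (ne_of_gt hpos)
  rw [part1 0 1 ω, part1 0 0 ω, part1 1 1 ω, ← Complex.mul_conj, map_mul, map_mul,
    Complex.conj_ofReal, hconj 0, hconj 1,
    div_eq_one_iff_eq (mul_ne_zero (mul_ne_zero (mul_ne_zero hFne h0) h0)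
      (mul_ne_zero (mul_ne_zero hFne h1) h1))]
  ring
end

section
/- Fix d ≥ 1, ν > 0, a > 0, a₁₂ > 0 and ρ ≠ 0, and define the squared coherence of the common-smoothness, equal marginal range bivariate Matérn model, γ(ω)² = ρ² · ( a₁₂²/a² )^{2ν} · ( ( a² + ‖ω‖² )² / ( a₁₂² + ‖ω‖² )² )^{ν + d/2}. Then: (i) if a₁₂ < a, γ(ω)² is a strictly decreasing function of ‖ω‖, so coherence is greater at low frequencies than at high frequencies; and (ii) if a₁₂ > a, γ(ω)² is a strictly increasing function of ‖ω‖, i.e., ‖ω₁‖ < ‖ω₂‖ implies γ(ω₁)² < γ(ω₂)². -/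
lemma ratio_strict_anti {b c t₁ t₂ : ℝ} (hc : 0 < c) (ht₁ : 0 ≤ t₁) (h : t₁ < t₂)
    (hbc : c < b) : (b + t₂) / (c + t₂) < (b + t₁) / (c + t₁) := by
  rw [div_lt_div_iff₀ (by linarith) (by linarith)]
  nlinarith

/-- For the common-smoothness, equal-marginal-range bivariate Matérn, the squared coherence
`γ(ω)² = ρ²·(a₁₂²/a²)^{2ν}·((a² + ‖ω‖²)²/(a₁₂² + ‖ω‖²)²)^{ν + d/2}` is strictly decreasing
in `‖ω‖` when `a₁₂ < a`, and strictly increasing in `‖ω‖` when `a₁₂ > a`. -/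
theorem bivariate_matern_cross_range_monotone_coherence (d : ℕ) (hd : 1 ≤ d)
    (ν a a₁₂ ρ : ℝ)
    (hν : 0 < ν) (ha : 0 < a) (ha₁₂ : 0 < a₁₂) (hρ : ρ ≠ 0)
    (γsq : EuclideanSpace ℝ (Fin d) → ℝ)
    (hγsq : ∀ ω, γsq ω =
      ρ ^ 2 * (a₁₂ ^ 2 / a ^ 2) ^ (2 * ν) *
        ((a ^ 2 + ‖ω‖ ^ 2) ^ 2 / (a₁₂ ^ 2 + ‖ω‖ ^ 2) ^ 2) ^ (ν + (d : ℝ) / 2)) :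
    (a₁₂ < a →
      ∀ ω₁ ω₂ : EuclideanSpace ℝ (Fin d), ‖ω₁‖ < ‖ω₂‖ → γsq ω₂ < γsq ω₁) ∧
    (a < a₁₂ →
      ∀ ω₁ ω₂ : EuclideanSpace ℝ (Fin d), ‖ω₁‖ < ‖ω₂‖ → γsq ω₁ < γsq ω₂) := by
  have hp : 0 < ν + (d : ℝ) / 2 := by positivity
  have hC : 0 < ρ ^ 2 * (a₁₂ ^ 2 / a ^ 2) ^ (2 * ν) := by positivity
  constructor
  · intro h ω₁ ω₂ hω
    have ht : ‖ω₁‖ ^ 2 < ‖ω₂‖ ^ 2 :=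
      pow_lt_pow_left₀ hω (norm_nonneg _) (by norm_num)
    rw [hγsq, hγsq]
    apply mul_lt_mul_of_pos_left _ hC
    apply Real.rpow_lt_rpow (by positivity) _ hp
    rw [← div_pow, ← div_pow]
    apply pow_lt_pow_left₀ _ (by positivity) (by norm_num)
    exact ratio_strict_anti (by positivity) (by positivity) ht
      (by nlinarith [sq_nonneg a₁₂])
  · intro h ω₁ ω₂ hω
    have ht : ‖ω₁‖ ^ 2 < ‖ω₂‖ ^ 2 :=
      pow_lt_pow_left₀ hω (norm_nonneg _) (by norm_num)
    rw [hγsq, hγsq]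
    apply mul_lt_mul_of_pos_left _ hC
    apply Real.rpow_lt_rpow (by positivity) _ hp
    rw [← div_pow, ← div_pow]
    apply pow_lt_pow_left₀ _ (by positivity) (by norm_num)
    have := ratio_strict_anti (b := a₁₂ ^ 2) (c := a ^ 2) (by positivity) (by positivity)
      ht (by nlinarith [sq_nonneg a])
    rw [div_lt_div_iff₀ (by positivity) (by positivity)] at this ⊢
    nlinarith
end

section
/- Let f₁, f₂ : ℝ^d → ℝ satisfy f₁(ω) > 0 and f₂(ω) > 0 for all ω ∈ ℝ^d, and let b₁₂, b₂₁ ∈ ℝ. Define f₁₁(ω) = f₁(ω) + b₁₂²·f₂(ω), f₂₂(ω) = b₂₁²·f₁(ω) + f₂(ω), and f₁₂(ω) = b₂₁·f₁(ω) + b₁₂·f₂(ω). Then the squared coherence f₁₂(ω)²/( f₁₁(ω)·f₂₂(ω) ) equals 1 for all ω ∈ ℝ^d if and only if b₁₂·b₂₁ = 1. (Indeed, f₁₁(ω)·f₂₂(ω) − f₁₂(ω)² = (1 − b₁₂·b₂₁)²·f₁(ω)·f₂(ω).) -/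
/-- In the LMC with `b₁₁ = b₂₂ = 1`, where `f₁₁ = f₁ + b₁₂²·f₂`, `f₂₂ = b₂₁²·f₁ + f₂` and
`f₁₂ = b₂₁·f₁ + b₁₂·f₂`, the squared coherence is identically `1` iff `b₁₂·b₂₁ = 1`;
indeed `f₁₁·f₂₂ − f₁₂² = (1 − b₁₂·b₂₁)²·f₁·f₂`. -/
theorem lmc_unit_coherence_iff (d : ℕ)
    (f1 f2 : EuclideanSpace ℝ (Fin d) → ℝ)
    (hf1 : ∀ ω, 0 < f1 ω) (hf2 : ∀ ω, 0 < f2 ω)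
    (b12 b21 : ℝ) :
    ((∀ ω, (b21 * f1 ω + b12 * f2 ω) ^ 2 /
        ((f1 ω + b12 ^ 2 * f2 ω) * (b21 ^ 2 * f1 ω + f2 ω)) = 1) ↔
      b12 * b21 = 1) ∧
    (∀ ω, (f1 ω + b12 ^ 2 * f2 ω) * (b21 ^ 2 * f1 ω + f2 ω) -
        (b21 * f1 ω + b12 * f2 ω) ^ 2 =
      (1 - b12 * b21) ^ 2 * f1 ω * f2 ω) := by
  have key : ∀ ω, (f1 ω + b12 ^ 2 * f2 ω) * (b21 ^ 2 * f1 ω + f2 ω) -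
      (b21 * f1 ω + b12 * f2 ω) ^ 2 = (1 - b12 * b21) ^ 2 * f1 ω * f2 ω := by
    intro ω; ring
  have hden : ∀ ω, 0 < (f1 ω + b12 ^ 2 * f2 ω) * (b21 ^ 2 * f1 ω + f2 ω) := by
    intro ω
    have := hf1 ω; have := hf2 ω
    positivity
  refine ⟨⟨fun h => ?_, fun h ω => ?_⟩, key⟩
  · have h0 := h 0
    have hd := (hden 0).ne'
    have : (b21 * f1 0 + b12 * f2 0) ^ 2 =
        (f1 0 + b12 ^ 2 * f2 0) * (b21 ^ 2 * f1 0 + f2 0) := by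
      rw [div_eq_one_iff_eq hd] at h0; linarith [h0]
    have h2 : (1 - b12 * b21) ^ 2 * f1 0 * f2 0 = 0 := by
      have := key 0; linarith
    have h3 : (1 - b12 * b21) ^ 2 = 0 := by
      rcases mul_eq_zero.1 h2 with h4 | h4
      · rcases mul_eq_zero.1 h4 with h5 | h5
        · exact h5
        · exact absurd h5 (hf1 0).ne'
      · exact absurd h4 (hf2 0).ne'
    have := pow_eq_zero_iff (n := 2) (by norm_num) |>.1 h3
    linarith
  · have hd := (hden ω).ne'
    have hk := key ω
    rw [h] at hk
    have : (b21 * f1 ω + b12 * f2 ω) ^ 2 =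
        (f1 ω + b12 ^ 2 * f2 ω) * (b21 ^ 2 * f1 ω + f2 ω) := by
      nlinarith [hk]
    rw [this, div_self hd]
end

section
/- Let p ≥ 1 and let f_{ij} : ℝ^d → ℂ be integrable functions for i, j ∈ {1, …, p} such that for every ω ∈ ℝ^d the p × p matrix ( f_{ij}(ω) )_{i,j} is Hermitian positive semidefinite. Define C_{ij}(h) = ∫_{ℝ^d} e^{i⟨ω,h⟩}·f_{ij}(ω) dω for h ∈ ℝ^d. Then the matrix-valued function C = (C_{ij}) is nonnegative definite: for every n ≥ 1, all locations s₁, …, s_n ∈ ℝ^d and all complex numbers a_{ik} (1 ≤ i ≤ p, 1 ≤ k ≤ n), the quantity Σ_{i=1}^p Σ_{j=1}^p Σ_{k=1}^n Σ_{ℓ=1}^n a_{ik}·conj(a_{jℓ})·C_{ij}(s_k − s_ℓ) is a nonnegative real number. -/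
open MeasureTheory
open scoped RealInnerProductSpace ComplexOrder

/-- Sufficiency direction of Cramér's theorem (densities case): if the matrix of integrable
spectral densities `(f_ij(ω))` is Hermitian positive semidefinite for every `ω`, then the
matrix-valued function `C_ij(h) = ∫ e^{i⟨ω,h⟩}·f_ij(ω) dω` is nonnegative definite. -/
theorem cramer_sufficiency (d p : ℕ) (hp : 1 ≤ p)
    (f : Fin p → Fin p → EuclideanSpace ℝ (Fin d) → ℂ)
    (hfint : ∀ i j, Integrable (f i j))
    (hpsd : ∀ ω : EuclideanSpace ℝ (Fin d),
      (Matrix.of fun i j => f i j ω).PosSemidef)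
    (C : Fin p → Fin p → EuclideanSpace ℝ (Fin d) → ℂ)
    (hC : ∀ i j h, C i j h = ∫ ω, Complex.exp (Complex.I * (⟪ω, h⟫ : ℂ)) * f i j ω) :
    ∀ (n : ℕ) (s : Fin n → EuclideanSpace ℝ (Fin d)) (a : Fin p → Fin n → ℂ),
      0 ≤ (∑ i, ∑ j, ∑ k, ∑ l,
        a i k * (starRingEnd ℂ) (a j l) * C i j (s k - s l)).re ∧
      (∑ i, ∑ j, ∑ k, ∑ l,
        a i k * (starRingEnd ℂ) (a j l) * C i j (s k - s l)).im = 0 := by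
  intro n s a
  -- integrability of each term
  have hcont : ∀ h : EuclideanSpace ℝ (Fin d),
      Continuous fun ω : EuclideanSpace ℝ (Fin d) =>
        Complex.exp (Complex.I * (⟪ω, h⟫ : ℂ)) := by
    intro h
    exact Complex.continuous_exp.comp (continuous_const.mul
      (Complex.continuous_ofReal.comp (continuous_id.inner continuous_const)))
  have hterm : ∀ (i j : Fin p) (h : EuclideanSpace ℝ (Fin d)) (c : ℂ),
      Integrable (fun ω => c * (Complex.exp (Complex.I * (⟪ω, h⟫ : ℂ)) * f i j ω)) := by
    intro i j h c
    apply Integrable.const_mul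
    refine (hfint i j).bdd_mul (c := 1) ((hcont h).aestronglyMeasurable) (Filter.Eventually.of_forall fun ω => ?_)
    rw [Complex.norm_exp]
    simp
  -- pull sums inside the integral
  have key : (∑ i, ∑ j, ∑ k, ∑ l, a i k * (starRingEnd ℂ) (a j l) * C i j (s k - s l))
      = ∫ ω, ∑ i, ∑ j, ∑ k, ∑ l, a i k * (starRingEnd ℂ) (a j l) *
          (Complex.exp (Complex.I * (⟪ω, s k - s l⟫ : ℂ)) * f i j ω) := by
    rw [integral_finset_sum _ (fun i _ => integrable_finset_sum _ (fun j _ =>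
      integrable_finset_sum _ (fun k _ => integrable_finset_sum _ (fun l _ => hterm _ _ _ _))))]
    refine Finset.sum_congr rfl fun i _ => ?_
    rw [integral_finset_sum _ (fun j _ => integrable_finset_sum _
      (fun k _ => integrable_finset_sum _ (fun l _ => hterm _ _ _ _)))]
    refine Finset.sum_congr rfl fun j _ => ?_
    rw [integral_finset_sum _ (fun k _ => integrable_finset_sum _ (fun l _ => hterm _ _ _ _))]
    refine Finset.sum_congr rfl fun k _ => ?_
    rw [integral_finset_sum _ (fun l _ => hterm _ _ _ _)]
    refine Finset.sum_congr rfl fun l _ => ?_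
    rw [hC, ← integral_const_mul]
  -- pointwise rewriting as a quadratic form
  set b : EuclideanSpace ℝ (Fin d) → Fin p → ℂ :=
    fun ω i => ∑ k, a i k * Complex.exp (Complex.I * (⟪ω, s k⟫ : ℂ)) with hb
  have hpt : ∀ ω, (∑ i, ∑ j, ∑ k, ∑ l, a i k * (starRingEnd ℂ) (a j l) *
          (Complex.exp (Complex.I * (⟪ω, s k - s l⟫ : ℂ)) * f i j ω))
      = ∑ i, ∑ j, b ω i * (starRingEnd ℂ) (b ω j) * f i j ω := by
    intro ω
    refine Finset.sum_congr rfl fun i _ => Finset.sum_congr rfl fun j _ => ?_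
    rw [hb]
    simp only [map_sum, map_mul, Finset.sum_mul, Finset.mul_sum]
    rw [Finset.sum_comm]
    refine Finset.sum_congr rfl fun l _ => Finset.sum_congr rfl fun k _ => ?_
    have hsub : ((⟪ω, s k - s l⟫ : ℝ) : ℂ) = ((⟪ω, s k⟫ : ℝ) : ℂ) - ((⟪ω, s l⟫ : ℝ) : ℂ) := by
      rw [inner_sub_right]; push_cast; ring
    rw [← Complex.exp_conj, map_mul, Complex.conj_I, Complex.conj_ofReal, hsub, mul_sub,
      Complex.exp_sub, neg_mul, Complex.exp_neg, div_eq_mul_inv]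
    ring
  -- pointwise nonnegativity from positive semidefiniteness
  have hnn : ∀ ω, 0 ≤ ∑ i, ∑ j, b ω i * (starRingEnd ℂ) (b ω j) * f i j ω := by
    intro ω
    have h0 := (hpsd ω).dotProduct_mulVec_nonneg (fun j => (starRingEnd ℂ) (b ω j))
    convert h0 using 1
    simp only [dotProduct, Matrix.mulVec, Pi.star_apply, Matrix.of_apply,
      RCLike.star_def, RingHomCompTriple.comp_apply, RingHom.id_apply, Complex.conj_conj]
    refine Finset.sum_congr rfl fun i _ => ?_
    rw [Finset.mul_sum]
    refine Finset.sum_congr rfl fun j _ => ?_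
    ring
  have hgint : Integrable (fun ω => ∑ i, ∑ j, ∑ k, ∑ l, a i k * (starRingEnd ℂ) (a j l) *
      (Complex.exp (Complex.I * (⟪ω, s k - s l⟫ : ℂ)) * f i j ω)) :=
    integrable_finset_sum _ (fun i _ => integrable_finset_sum _ (fun j _ =>
      integrable_finset_sum _ (fun k _ => integrable_finset_sum _ (fun l _ => hterm _ _ _ _))))
  have hnn' : ∀ ω, 0 ≤ (∑ i, ∑ j, ∑ k, ∑ l, a i k * (starRingEnd ℂ) (a j l) *
      (Complex.exp (Complex.I * (⟪ω, s k - s l⟫ : ℂ)) * f i j ω)).re ∧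
      (∑ i, ∑ j, ∑ k, ∑ l, a i k * (starRingEnd ℂ) (a j l) *
      (Complex.exp (Complex.I * (⟪ω, s k - s l⟫ : ℂ)) * f i j ω)).im = 0 := by
    intro ω
    rw [hpt ω]
    have := hnn ω
    rw [Complex.le_def] at this
    exact ⟨by simpa using this.1, by simpa using this.2.symm⟩
  have hre := integral_re (𝕜 := ℂ) hgint
  have him := integral_im (𝕜 := ℂ) hgint
  simp only [RCLike.re_to_complex, RCLike.im_to_complex] at hre him
  constructor
  · rw [key, ← hre]
    exact integral_nonneg fun ω => (hnn' ω).1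
  · rw [key, ← him]
    have : (fun ω => (∑ i, ∑ j, ∑ k, ∑ l, a i k * (starRingEnd ℂ) (a j l) *
        (Complex.exp (Complex.I * (⟪ω, s k - s l⟫ : ℂ)) * f i j ω)).im)
        = fun _ : EuclideanSpace ℝ (Fin d) => (0 : ℝ) := by
      funext ω; exact (hnn' ω).2
    rw [this, integral_zero]
end
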